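/- Let β₁, β₂, θ₀, θ₁ be real numbers and suppose there exist four pairwise distinct reals a₁, a₂, a₃, a₄ and a constant c such that β₁·aᵢ + β₂·expit(θ₀ + θ₁·aᵢ) = c for i = 1, 2, 3, 4. Then β₁ = 0 and moreover θ₁ = 0 or β₂ = 0. (This is the g-null paradox: the mean E[Y | do(a,b)] = β₀ + β₁a + β₃b + β₂·expit(θ₀ + θ₁a) of the linear-logistic structural model can be independent of a treatment a taking at least four distinct values only on the singular submodel where β₁ = 0 and either θ₁ = 0 or β₂ = 0.) -/

import Mathlib

open Real Set

private lemma rolle4 {F F' F'' : ℝ → ℝ}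
    (hF' : ∀ x, HasDerivAt F (F' x) x) (hF'' : ∀ x, HasDerivAt F' (F'' x) x)
    {b : Fin 4 → ℝ} (hb : StrictMono b) (h0 : ∀ i, F (b i) = 0) :
    ∃ x y : ℝ, x ≠ y ∧ F'' x = 0 ∧ F'' y = 0 := by
  have rolle : ∀ (G G' : ℝ → ℝ) (u v : ℝ), u < v → (∀ x, HasDerivAt G (G' x) x) →
      G u = G v → ∃ w ∈ Ioo u v, G' w = 0 := by
    intro G G' u v huv hG hGuv
    exact exists_hasDerivAt_eq_zero huv
      (fun x _ => (hG x).continuousAt.continuousWithinAt) hGuv (fun x _ => hG x)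
  have h01 : b 0 < b 1 := hb (by decide)
  have h12 : b 1 < b 2 := hb (by decide)
  have h23 : b 2 < b 3 := hb (by decide)
  obtain ⟨c0, hc0, hc0'⟩ := rolle F F' (b 0) (b 1) h01 hF' (by rw [h0 0, h0 1])
  obtain ⟨c1, hc1, hc1'⟩ := rolle F F' (b 1) (b 2) h12 hF' (by rw [h0 1, h0 2])
  obtain ⟨c2, hc2, hc2'⟩ := rolle F F' (b 2) (b 3) h23 hF' (by rw [h0 2, h0 3])
  have hcc0 : c0 < c1 := lt_trans hc0.2 hc1.1
  have hcc1 : c1 < c2 := lt_trans hc1.2 hc2.1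
  obtain ⟨d0, hd0, hd0'⟩ := rolle F' F'' c0 c1 hcc0 hF'' (by rw [hc0', hc1'])
  obtain ⟨d1, hd1, hd1'⟩ := rolle F' F'' c1 c2 hcc1 hF'' (by rw [hc1', hc2'])
  exact ⟨d0, d1, ne_of_lt (lt_trans hd0.2 hd1.1), hd0', hd1'⟩

/-- The g-null paradox: if `β₁·a + β₂·expit(θ₀ + θ₁·a)` takes the same value `c` at
four pairwise distinct points `a₁, a₂, a₃, a₄`, then `β₁ = 0` and moreover `θ₁ = 0`
or `β₂ = 0`. -/
theorem g_null_paradox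
    (β₁ β₂ θ₀ θ₁ : ℝ)
    (h : ∃ (a : Fin 4 → ℝ) (c : ℝ), Function.Injective a ∧
      ∀ i, β₁ * a i + β₂ * (1 / (1 + Real.exp (-(θ₀ + θ₁ * a i)))) = c) :
    β₁ = 0 ∧ (θ₁ = 0 ∨ β₂ = 0) := by
  obtain ⟨a, c, hinj, heq⟩ := h
  have hpos : ∀ x : ℝ, (0:ℝ) < 1 + Real.exp (-(θ₀ + θ₁ * x)) := by
    intro x; positivity
  -- Step 1: β₁ = 0
  have hb1 : β₁ = 0 := by
    by_contra hβ₁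
    by_cases hθ₁ : θ₁ = 0
    · -- then β₁ * a i is constant
      have h0 := heq 0
      have h1 := heq 1
      rw [hθ₁] at h0 h1
      simp only [zero_mul] at h0 h1
      have : β₁ * a 0 = β₁ * a 1 := by linarith
      have : a 0 = a 1 := mul_left_cancel₀ hβ₁ this
      exact absurd (hinj this) (by decide)
    · -- sort the points
      have hcard : (Finset.image a Finset.univ).card = 4 := by
        rw [Finset.card_image_of_injective _ hinj, Finset.card_univ, Fintype.card_fin]
      set e := (Finset.image a Finset.univ).orderIsoOfFin hcard with he
      set b : Fin 4 → ℝ := fun i => (e i : ℝ) with hbdef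
      have hbmono : StrictMono b := fun i j hij => e.strictMono hij
      have hbeq : ∀ i, β₁ * b i + β₂ * (1 / (1 + Real.exp (-(θ₀ + θ₁ * b i)))) = c := by
        intro i
        have hm : (e i : ℝ) ∈ Finset.image a Finset.univ := (e i).2
        rw [Finset.mem_image] at hm
        obtain ⟨j, _, hj⟩ := hm
        have h' := heq j
        rw [hj] at h'
        exact h'
      -- define F and its derivatives
      set E : ℝ → ℝ := fun x => Real.exp (-(θ₀ + θ₁ * x)) with hE
      set F : ℝ → ℝ := fun x => (c - β₁ * x) * (1 + E x) - β₂ with hF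
      set F' : ℝ → ℝ := fun x => (-β₁) * (1 + E x) + (c - β₁ * x) * (E x * (-θ₁)) with hF'
      set F'' : ℝ → ℝ := fun x =>
        (-β₁) * (E x * (-θ₁)) + ((-β₁) * (E x * (-θ₁)) + (c - β₁ * x) * (E x * (-θ₁) * (-θ₁)))
        with hF''
      have hEd : ∀ x, HasDerivAt E (E x * (-θ₁)) x := by
        intro x
        have h1 : HasDerivAt (fun x : ℝ => -(θ₀ + θ₁ * x)) (-θ₁) x := by
          have : HasDerivAt (fun x : ℝ => θ₀ + θ₁ * x) θ₁ x := by
            simpa using (((hasDerivAt_id x).const_mul θ₁).const_add θ₀)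
          exact this.neg
        exact h1.exp
      have hFd : ∀ x, HasDerivAt F (F' x) x := by
        intro x
        have h1 : HasDerivAt (fun x : ℝ => c - β₁ * x) (-β₁) x := by
          simpa using (((hasDerivAt_id x).const_mul β₁).const_sub c)
        have h2 : HasDerivAt (fun x : ℝ => 1 + E x) (E x * (-θ₁)) x := (hEd x).const_add 1
        simpa [hF, hF'] using ((h1.mul h2).sub_const β₂)
      have hFd' : ∀ x, HasDerivAt F' (F'' x) x := by
        intro x
        have h1 : HasDerivAt (fun x : ℝ => c - β₁ * x) (-β₁) x := by
          simpa using (((hasDerivAt_id x).const_mul β₁).const_sub c)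
        have h2 : HasDerivAt (fun x : ℝ => 1 + E x) (E x * (-θ₁)) x := (hEd x).const_add 1
        have h3 : HasDerivAt (fun x : ℝ => E x * (-θ₁)) (E x * (-θ₁) * (-θ₁)) x :=
          (hEd x).mul_const (-θ₁)
        exact (h2.const_mul (-β₁)).add (h1.mul h3)
      have hF0 : ∀ i, F (b i) = 0 := by
        intro i
        have := hbeq i
        have hp := hpos (b i)
        rw [hF]
        simp only [hE]
        field_simp at this ⊢
        nlinarith [this]
      obtain ⟨x, y, hxy, hx, hy⟩ := rolle4 hFd hFd' hbmono hF0
      -- F'' x = 0 means 2β₁ + θ₁(c - β₁ x) = 0 (after dividing by θ₁ E x)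
      have key : ∀ z : ℝ, F'' z = 0 → 2 * β₁ + θ₁ * (c - β₁ * z) = 0 := by
        intro z hz
        rw [hF''] at hz
        have hEpos : 0 < E z := Real.exp_pos _
        have : E z * θ₁ * (2 * β₁ + θ₁ * (c - β₁ * z)) = 0 := by ring_nf; ring_nf at hz; linarith
        rcases mul_eq_zero.mp this with h | h
        · rcases mul_eq_zero.mp h with h | h
          · exact absurd h (ne_of_gt hEpos)
          · exact absurd h hθ₁
        · exact h
      have kx := key x hx
      have ky := key y hy
      have : θ₁ * β₁ * (x - y) = 0 := by linarith [kx, ky, mul_comm θ₁ β₁]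
      rcases mul_eq_zero.mp this with h | h
      · rcases mul_eq_zero.mp h with h | h
        · exact hθ₁ h
        · exact hβ₁ h
      · exact hxy (by linarith)
  refine ⟨hb1, ?_⟩
  by_contra hcon
  push_neg at hcon
  obtain ⟨hθ₁, hβ₂⟩ := hcon
  have h0 := heq 0
  have h1 := heq 1
  rw [hb1] at h0 h1
  simp only [zero_mul, zero_add] at h0 h1
  have hσ : (1 : ℝ) / (1 + Real.exp (-(θ₀ + θ₁ * a 0))) =
      1 / (1 + Real.exp (-(θ₀ + θ₁ * a 1))) := by
    have : β₂ * (1 / (1 + Real.exp (-(θ₀ + θ₁ * a 0)))) =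
        β₂ * (1 / (1 + Real.exp (-(θ₀ + θ₁ * a 1)))) := by linarith
    exact mul_left_cancel₀ hβ₂ this
  have p0 := hpos (a 0)
  have p1 := hpos (a 1)
  have hexp : Real.exp (-(θ₀ + θ₁ * a 0)) = Real.exp (-(θ₀ + θ₁ * a 1)) := by
    have h1' : 1 + Real.exp (-(θ₀ + θ₁ * a 0)) = 1 + Real.exp (-(θ₀ + θ₁ * a 1)) := by
      have := hσ
      field_simp at this
      linarith
    linarith
  have hlog := Real.exp_injective hexp
  have ha : a 0 = a 1 := by
    have : θ₁ * a 0 = θ₁ * a 1 := by linarith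
    exact mul_left_cancel₀ hθ₁ this
  exact absurd (hinj ha) (by decide)
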